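/- arXiv:1104.3455 — 4 statements merged into one kernel-verified Lean document; each statement's English description precedes it below -/
import Mathlib

section
/- Let 𝓗 be a complex Hilbert space, (e_n)_{n∈ℕ} an orthonormal sequence in 𝓗, and A : 𝓗 → 𝓗 a bounded linear bijection with bounded inverse. Set h_n = A e_n. Let V : ℕ → ℝ be non-increasing with V_n ≥ 0 for all n. For n ∈ ℕ define λ_n = sup over all (n+1)-dimensional subspaces L ⊆ 𝓗 of inf_{f∈L, ‖f‖=1} Σ_{k∈ℕ} V_k·|⟨f, h_k⟩|². Then for every n ∈ ℕ: ‖A⁻¹‖⁻² · V_n ≤ λ_n ≤ ‖A‖² · V_n. -/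
open scoped InnerProductSpace
open ContinuousLinearMap

/-- Abstract Hilbert-space form of the eigenvalue part of Theorem 2.1:
for `h n = A (e n)` with `(e n)` orthonormal and `A` a bounded bijection with
bounded inverse, and `V` non-increasing and non-negative, the Courant–Fischer
numbers `λ n` of the quadratic form `f ↦ Σ_k V k * |⟨f, h k⟩|²` satisfy
`‖A⁻¹‖⁻² V n ≤ λ n ≤ ‖A‖² V n`. -/
theorem stmt1
    (𝓗 : Type*) [NormedAddCommGroup 𝓗] [InnerProductSpace ℂ 𝓗] [CompleteSpace 𝓗]
    (e : ℕ → 𝓗) (he : Orthonormal ℂ e)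
    (A : 𝓗 ≃L[ℂ] 𝓗)
    (h : ℕ → 𝓗) (hh : ∀ n, h n = A (e n))
    (V : ℕ → ℝ) (hV0 : ∀ n, 0 ≤ V n) (hVmono : Antitone V)
    (lam : ℕ → ℝ)
    (hlam : ∀ n, lam n =
      ⨆ L : {L : Submodule ℂ 𝓗 // Module.finrank ℂ L = n + 1},
        ⨅ f : {f : 𝓗 // f ∈ (L : Submodule ℂ 𝓗) ∧ ‖f‖ = 1},
          ∑' k, V k * ‖(⟪(f : 𝓗), h k⟫_ℂ : ℂ)‖ ^ 2) :
    ∀ n, ‖(A.symm : 𝓗 →L[ℂ] 𝓗)‖⁻¹ ^ 2 * V n ≤ lam n ∧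
      lam n ≤ ‖(A : 𝓗 →L[ℂ] 𝓗)‖ ^ 2 * V n := by
  classical
  -- preliminary facts, independent of n
  have hinner : ∀ (f : 𝓗) (k : ℕ),
      ⟪f, h k⟫_ℂ = ⟪(adjoint (A : 𝓗 →L[ℂ] 𝓗)) f, e k⟫_ℂ := by
    intro f k
    rw [hh, adjoint_inner_left]
    rfl
  have hsum0 : ∀ f : 𝓗, Summable (fun k => ‖⟪f, h k⟫_ℂ‖ ^ 2) := by
    intro f
    have := he.inner_products_summable (x := (adjoint (A : 𝓗 →L[ℂ] 𝓗)) f)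
    refine this.congr fun k => ?_
    rw [hinner, norm_inner_symm]
  have hbessel : ∀ f : 𝓗, ∑' k, ‖⟪f, h k⟫_ℂ‖ ^ 2 ≤ (‖(A : 𝓗 →L[ℂ] 𝓗)‖ * ‖f‖) ^ 2 := by
    intro f
    have h1 : ∑' k, ‖⟪f, h k⟫_ℂ‖ ^ 2 ≤ ‖(adjoint (A : 𝓗 →L[ℂ] 𝓗)) f‖ ^ 2 := by
      have := he.tsum_inner_products_le ((adjoint (A : 𝓗 →L[ℂ] 𝓗)) f)
      refine le_trans (le_of_eq ?_) this
      exact tsum_congr fun k => by rw [hinner, norm_inner_symm]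
    refine h1.trans ?_
    have h2 : ‖(adjoint (A : 𝓗 →L[ℂ] 𝓗)) f‖ ≤ ‖(A : 𝓗 →L[ℂ] 𝓗)‖ * ‖f‖ := by
      calc ‖(adjoint (A : 𝓗 →L[ℂ] 𝓗)) f‖ ≤ ‖adjoint (A : 𝓗 →L[ℂ] 𝓗)‖ * ‖f‖ := le_opNorm _ _
      _ = ‖(A : 𝓗 →L[ℂ] 𝓗)‖ * ‖f‖ := by rw [LinearIsometryEquiv.norm_map adjoint]
    exact pow_le_pow_left₀ (norm_nonneg _) h2 2
  have hsum : ∀ f : 𝓗, Summable (fun k => V k * ‖⟪f, h k⟫_ℂ‖ ^ 2) := by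
    intro f
    refine Summable.of_nonneg_of_le (fun k => mul_nonneg (hV0 k) (by positivity))
      (fun k => mul_le_mul_of_nonneg_right (hVmono (Nat.zero_le k)) (by positivity))
      ((hsum0 f).mul_left (V 0))
  have he0 : e 0 ≠ 0 := by
    intro hc
    have := he.1 0
    rw [hc, norm_zero] at this
    exact one_ne_zero this.symm
  have hAs_pos : 0 < ‖(A.symm : 𝓗 →L[ℂ] 𝓗)‖ := by
    rw [norm_pos_iff]
    intro hc
    apply he0
    have : (A.symm : 𝓗 →L[ℂ] 𝓗) (A (e 0)) = 0 := by rw [hc]; rfl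
    rwa [ContinuousLinearEquiv.coe_coe, A.symm_apply_apply] at this
  intro n
  -- the distinguished subspace L0
  set E0 : Submodule ℂ 𝓗 := Submodule.span ℂ (Set.range fun k : Fin (n+1) => e k) with hE0
  set L0 : Submodule ℂ 𝓗 := E0.map (A.toLinearEquiv : 𝓗 →ₗ[ℂ] 𝓗) with hL0
  have hrankL0 : Module.finrank ℂ L0 = n + 1 := by
    have hli : LinearIndependent ℂ (fun k : Fin (n+1) => e k) :=
      he.linearIndependent.comp _ Fin.val_injective
    rw [hL0, LinearEquiv.finrank_map_eq, hE0, finrank_span_eq_card hli, Fintype.card_fin]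
  have hmem : ∀ k : Fin (n+1), h k ∈ L0 := by
    intro k
    exact ⟨e k, Submodule.subset_span ⟨k, rfl⟩, (hh k).symm⟩
  have hh0 : h 0 ≠ 0 := by
    rw [hh]
    intro hc
    apply he0
    have := congrArg A.symm hc
    rwa [A.symm_apply_apply, map_zero] at this
  -- nonemptiness of the index types
  have hL0ne : Nonempty {f : 𝓗 // f ∈ L0 ∧ ‖f‖ = 1} := by
    refine ⟨⟨(‖h 0‖⁻¹ : ℂ) • h 0, ?_, norm_smul_inv_norm hh0⟩⟩
    have := hmem ⟨0, Nat.succ_pos n⟩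
    exact L0.smul_mem _ this
  have hidxne : Nonempty {L : Submodule ℂ 𝓗 // Module.finrank ℂ L = n + 1} := ⟨⟨L0, hrankL0⟩⟩
  -- upper bound: for every L of dimension n+1 the infimum is at most ‖A‖² V n
  have key_upper : ∀ L : {L : Submodule ℂ 𝓗 // Module.finrank ℂ L = n + 1},
      (⨅ f : {f : 𝓗 // f ∈ (L : Submodule ℂ 𝓗) ∧ ‖f‖ = 1},
          ∑' k, V k * ‖(⟪(f : 𝓗), h k⟫_ℂ : ℂ)‖ ^ 2) ≤ ‖(A : 𝓗 →L[ℂ] 𝓗)‖ ^ 2 * V n := by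
    rintro ⟨L, hL⟩
    -- find a unit vector in L orthogonal to h 0, …, h (n-1)
    haveI : FiniteDimensional ℂ L := FiniteDimensional.of_finrank_pos (by omega)
    obtain ⟨f, hfL, hf1, hforth⟩ :
        ∃ f : 𝓗, f ∈ L ∧ ‖f‖ = 1 ∧ ∀ k < n, ⟪f, h k⟫_ℂ = 0 := by
      set φ : L →ₗ[ℂ] (Fin n → ℂ) :=
        LinearMap.pi (fun k : Fin n => ((innerSL ℂ (h k)).toLinearMap).comp L.subtype) with hφ
      have hker : LinearMap.ker φ ≠ ⊥ := by
        intro hbot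
        have hinj : Function.Injective φ := LinearMap.ker_eq_bot.mp hbot
        have := LinearMap.finrank_le_finrank_of_injective hinj
        simp [hL, Module.finrank_pi] at this
      obtain ⟨x, hx, hx0⟩ := (Submodule.ne_bot_iff _).mp hker
      have hx0' : (x : 𝓗) ≠ 0 := fun hc => hx0 (Subtype.ext hc)
      refine ⟨(‖(x:𝓗)‖⁻¹ : ℂ) • (x : 𝓗), L.smul_mem _ x.2, norm_smul_inv_norm hx0', ?_⟩
      intro k hk
      have hφx : φ x = 0 := hx
      have hcomp : ⟪h k, (x : 𝓗)⟫_ℂ = 0 := by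
        have := congrFun hφx ⟨k, hk⟩
        simpa [hφ] using this
      have : ⟪(x : 𝓗), h k⟫_ℂ = 0 := by
        rw [← inner_conj_symm, hcomp, map_zero]
      rw [inner_smul_left, this, mul_zero]
    -- bound the value at f
    have hval : ∑' k, V k * ‖(⟪f, h k⟫_ℂ : ℂ)‖ ^ 2 ≤ ‖(A : 𝓗 →L[ℂ] 𝓗)‖ ^ 2 * V n := by
      have step1 : ∑' k, V k * ‖(⟪f, h k⟫_ℂ : ℂ)‖ ^ 2 ≤ ∑' k, V n * ‖(⟪f, h k⟫_ℂ : ℂ)‖ ^ 2 := by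
        refine Summable.tsum_le_tsum (fun k => ?_) (hsum f) ((hsum0 f).mul_left (V n))
        rcases lt_or_ge k n with hk | hk
        · rw [hforth k hk]
          simp
        · exact mul_le_mul_of_nonneg_right (hVmono hk) (by positivity)
      have step2 : ∑' k, V n * ‖(⟪f, h k⟫_ℂ : ℂ)‖ ^ 2 ≤ V n * (‖(A : 𝓗 →L[ℂ] 𝓗)‖ * ‖f‖) ^ 2 := by
        rw [tsum_mul_left]
        exact mul_le_mul_of_nonneg_left (hbessel f) (hV0 n)
      refine step1.trans (step2.trans ?_)
      rw [hf1, mul_one, mul_comm]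
    refine le_trans (ciInf_le ?_ (⟨f, hfL, hf1⟩ :
        {f : 𝓗 // f ∈ L ∧ ‖f‖ = 1})) hval
    exact ⟨0, by rintro x ⟨g, rfl⟩; exact tsum_nonneg fun k => mul_nonneg (hV0 k) (by positivity)⟩
  -- lower bound for every unit vector in L0
  have key_lower : ∀ f : {f : 𝓗 // f ∈ L0 ∧ ‖f‖ = 1},
      ‖(A.symm : 𝓗 →L[ℂ] 𝓗)‖⁻¹ ^ 2 * V n ≤
        ∑' k, V k * ‖(⟪(f : 𝓗), h k⟫_ℂ : ℂ)‖ ^ 2 := by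
    rintro ⟨f, hfL, hf1⟩
    set g : 𝓗 := A.symm f with hg
    have hAg : A g = f := A.apply_symm_apply f
    obtain ⟨c, hc⟩ : ∃ c : Fin (n+1) → ℂ, (∑ k, c k • e k) = g := by
      obtain ⟨y, hy, rfl⟩ := hfL
      have hy2 : (A.toLinearEquiv : 𝓗 →ₗ[ℂ] 𝓗) y = A y := rfl
      rw [hg, hy2, A.symm_apply_apply]
      exact (Submodule.mem_span_range_iff_exists_fun ℂ).mp hy
    -- 1 = |⟪f, f⟫| = |∑ c k ⟪f, h k⟫|
    have hff : (⟪f, f⟫_ℂ : ℂ) = ∑ k : Fin (n+1), c k * ⟪f, h (k : ℕ)⟫_ℂ := by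
      calc (⟪f, f⟫_ℂ : ℂ) = ⟪f, A (∑ k : Fin (n+1), c k • e k)⟫_ℂ := by rw [hc, hAg]
        _ = ∑ k : Fin (n+1), c k * ⟪f, h (k : ℕ)⟫_ℂ := by
          rw [map_sum]
          simp_rw [map_smul, inner_sum, inner_smul_right, ← hh]
    have hone : (1 : ℝ) ≤ ∑ k : Fin (n+1), ‖c k‖ * ‖(⟪f, h (k : ℕ)⟫_ℂ : ℂ)‖ := by
      have h1 : ‖(⟪f, f⟫_ℂ : ℂ)‖ = 1 := by
        rw [@inner_self_eq_norm_sq_to_K ℂ, hf1]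
        norm_num
      calc (1 : ℝ) = ‖(⟪f, f⟫_ℂ : ℂ)‖ := h1.symm
        _ = ‖∑ k : Fin (n+1), c k * ⟪f, h (k : ℕ)⟫_ℂ‖ := by rw [hff]
        _ ≤ ∑ k : Fin (n+1), ‖c k * ⟪f, h (k : ℕ)⟫_ℂ‖ := norm_sum_le _ _
        _ = ∑ k : Fin (n+1), ‖c k‖ * ‖(⟪f, h (k : ℕ)⟫_ℂ : ℂ)‖ := by simp [norm_mul]
    -- Cauchy–Schwarz
    set S : ℝ := ∑ k : Fin (n+1), ‖(⟪f, h (k : ℕ)⟫_ℂ : ℂ)‖ ^ 2 with hS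
    have hCS : (1 : ℝ) ≤ (∑ k : Fin (n+1), ‖c k‖ ^ 2) * S := by
      have := Finset.sum_mul_sq_le_sq_mul_sq Finset.univ
        (fun k : Fin (n+1) => ‖c k‖) (fun k : Fin (n+1) => ‖(⟪f, h (k : ℕ)⟫_ℂ : ℂ)‖)
      have h1 : (1 : ℝ) ≤ (∑ k : Fin (n+1), ‖c k‖ * ‖(⟪f, h (k : ℕ)⟫_ℂ : ℂ)‖) ^ 2 :=
        one_le_pow₀ hone
      exact h1.trans this
    -- ∑ ‖c k‖² = ‖g‖²
    have hcnorm : (∑ k : Fin (n+1), ‖c k‖ ^ 2) = ‖g‖ ^ 2 := by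
      have hon : Orthonormal ℂ (fun k : Fin (n+1) => e k) := he.comp _ Fin.val_injective
      have h1 := hon.inner_sum c c Finset.univ
      rw [hc, @inner_self_eq_norm_sq_to_K ℂ] at h1
      have h2 : (∑ k : Fin (n+1), (starRingEnd ℂ) (c k) * c k)
          = ((∑ k : Fin (n+1), ‖c k‖ ^ 2 : ℝ) : ℂ) := by
        push_cast
        exact Finset.sum_congr rfl fun k _ => RCLike.conj_mul (c k)
      rw [h2] at h1
      have h3 : ((∑ k : Fin (n+1), ‖c k‖ ^ 2 : ℝ) : ℂ) = ((‖g‖ ^ 2 : ℝ) : ℂ) := by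
        rw [← h1]; norm_cast
      exact_mod_cast h3
    have hgnorm : ‖g‖ ≤ ‖(A.symm : 𝓗 →L[ℂ] 𝓗)‖ := by
      calc ‖g‖ ≤ ‖(A.symm : 𝓗 →L[ℂ] 𝓗)‖ * ‖f‖ := (A.symm : 𝓗 →L[ℂ] 𝓗).le_opNorm f
        _ = ‖(A.symm : 𝓗 →L[ℂ] 𝓗)‖ := by rw [hf1, mul_one]
    have hSpos : ‖(A.symm : 𝓗 →L[ℂ] 𝓗)‖⁻¹ ^ 2 ≤ S := by
      have hS0 : 0 ≤ S := Finset.sum_nonneg fun k _ => by positivity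
      have h1 : (1 : ℝ) ≤ ‖(A.symm : 𝓗 →L[ℂ] 𝓗)‖ ^ 2 * S := by
        refine hCS.trans (mul_le_mul_of_nonneg_right ?_ hS0)
        rw [hcnorm]
        exact pow_le_pow_left₀ (norm_nonneg _) hgnorm 2
      rw [inv_pow]
      rw [inv_le_iff_one_le_mul₀ (by positivity)] at *
      · linarith [h1]
    -- conclude
    have hfin : V n * S ≤ ∑' k, V k * ‖(⟪f, h k⟫_ℂ : ℂ)‖ ^ 2 := by
      have h1 : V n * S ≤ ∑ k : Fin (n+1), V (k : ℕ) * ‖(⟪f, h (k : ℕ)⟫_ℂ : ℂ)‖ ^ 2 := by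
        rw [hS, Finset.mul_sum]
        refine Finset.sum_le_sum fun k _ => ?_
        exact mul_le_mul_of_nonneg_right (hVmono (Nat.lt_succ_iff.mp k.2)) (by positivity)
      have h2 : (∑ k : Fin (n+1), V (k : ℕ) * ‖(⟪f, h (k : ℕ)⟫_ℂ : ℂ)‖ ^ 2)
          = ∑ k ∈ Finset.range (n+1), V k * ‖(⟪f, h k⟫_ℂ : ℂ)‖ ^ 2 :=
        Fin.sum_univ_eq_sum_range (fun k => V k * ‖(⟪f, h k⟫_ℂ : ℂ)‖ ^ 2) (n+1)
      have h3 : (∑ k ∈ Finset.range (n+1), V k * ‖(⟪f, h k⟫_ℂ : ℂ)‖ ^ 2)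
          ≤ ∑' k, V k * ‖(⟪f, h k⟫_ℂ : ℂ)‖ ^ 2 :=
        Summable.sum_le_tsum _ (fun k _ => mul_nonneg (hV0 k) (by positivity)) (hsum f)
      linarith
    calc ‖(A.symm : 𝓗 →L[ℂ] 𝓗)‖⁻¹ ^ 2 * V n = V n * ‖(A.symm : 𝓗 →L[ℂ] 𝓗)‖⁻¹ ^ 2 := by ring
      _ ≤ V n * S := mul_le_mul_of_nonneg_left hSpos (hV0 n)
      _ ≤ _ := hfin
  constructor
  · -- lower bound
    rw [hlam n]
    refine le_trans (le_ciInf key_lower) ?_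
    refine le_ciSup_of_le ?_ (⟨L0, hrankL0⟩ :
      {L : Submodule ℂ 𝓗 // Module.finrank ℂ L = n + 1}) le_rfl
    exact ⟨‖(A : 𝓗 →L[ℂ] 𝓗)‖ ^ 2 * V n, by rintro x ⟨L, rfl⟩; exact key_upper L⟩
  · rw [hlam n]
    exact ciSup_le key_upper
end

section
/- Let Z(θ₁,θ₂) = 1 − (cos θ₁ + cos θ₂)/2. For every x ∈ ℤ² there exists a constant C > 0 such that |e^{iθ₂} − 1| · |e^{−i x·θ} − 1| ≤ C · Z(θ) for all θ ∈ [−π,π]² ∖ {0}; that is, the function K(θ) = (e^{iθ₂} − 1)(e^{−i x·θ} − 1)/Z(θ) is bounded on (−π,π)² ∖ {0}. -/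
open MeasureTheory

/-- The Fourier symbol `Z(θ) = 1 − (cos θ₁ + cos θ₂)/2` of the discrete
Laplacian on `ℤ²` (normalized by the vertex degree). -/
noncomputable def Zsym (θ : ℝ × ℝ) : ℝ := 1 - (Real.cos θ.1 + Real.cos θ.2) / 2

/-- The pairing `x·θ = x₁θ₁ + x₂θ₂` between `ℤ²` and `ℝ²`. -/
noncomputable def latticeDot (x : ℤ × ℤ) (θ : ℝ × ℝ) : ℝ :=
  (x.1 : ℝ) * θ.1 + (x.2 : ℝ) * θ.2

/-- The potential kernel `a(x) = (2π)⁻² ∫_{(−π,π)²} (1 − cos(x·θ))/Z(θ) dθ`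
of the simple random walk on `ℤ²`. -/
noncomputable def potentialKernel (x : ℤ × ℤ) : ℝ :=
  ((2 * Real.pi) ^ 2)⁻¹ *
    ∫ θ in Set.Ioo (-Real.pi) Real.pi ×ˢ Set.Ioo (-Real.pi) Real.pi,
      (1 - Real.cos (latticeDot x θ)) / Zsym θ

/-- The Green-type function `H_x(y) = a(x) + a(y) − a(x−y)` on `ℤ²`. -/
noncomputable def greenFn (x y : ℤ × ℤ) : ℝ :=
  potentialKernel x + potentialKernel y - potentialKernel (x - y)

/-- The Euclidean norm of a lattice point of `ℤ²`. -/
noncomputable def latticeNorm (x : ℤ × ℤ) : ℝ :=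
  Real.sqrt ((x.1 : ℝ) ^ 2 + (x.2 : ℝ) ^ 2)

lemma normsq_exp (t : ℝ) : ‖Complex.exp (Complex.I * t) - 1‖ ^ 2 = 2 - 2 * Real.cos t := by
  rw [mul_comm, Complex.exp_mul_I]
  rw [Complex.sq_norm, Complex.normSq_apply]
  simp [Complex.cos_ofReal_re, Complex.sin_ofReal_re]
  nlinarith [Real.sin_sq_add_cos_sq t]

set_option maxHeartbeats 1600000 in
/-- Key boundedness claim in the proof of Proposition 3.2: for every `x ∈ ℤ²`
there is `C > 0` with `|e^{iθ₂} − 1|·|e^{−ix·θ} − 1| ≤ C·Z(θ)` on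
`[−π,π]² ∖ {0}`, i.e. `K(θ) = (e^{iθ₂}−1)(e^{−ix·θ}−1)/Z(θ)` is bounded. -/
theorem stmt11 (x : ℤ × ℤ) :
    ∃ C : ℝ, 0 < C ∧
      ∀ θ ∈ (Set.Icc (-Real.pi) Real.pi ×ˢ Set.Icc (-Real.pi) Real.pi) \ {0},
        ‖Complex.exp (Complex.I * (θ.2 : ℂ)) - 1‖ *
            ‖Complex.exp (-Complex.I * (latticeDot x θ : ℂ)) - 1‖ ≤
          C * Zsym θ := by
  obtain ⟨M, hM⟩ : ∃ M : ℝ, M = |(x.1 : ℝ)| + |(x.2 : ℝ)| := ⟨_, rfl⟩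
  have hMnn : 0 ≤ M := by rw [hM]; positivity
  have hπ := Real.pi_pos
  refine ⟨3 * Real.pi * (M + 1), by positivity, ?_⟩
  rintro θ ⟨⟨h1, h2⟩, hne⟩
  have hne' : θ ≠ 0 := hne
  have h1' : |θ.1| ≤ Real.pi := abs_le.mpr ⟨h1.1, h1.2⟩
  have h2' : |θ.2| ≤ Real.pi := abs_le.mpr ⟨h2.1, h2.2⟩
  have hc1 := Real.cos_le_one_sub_mul_cos_sq h1'
  have hc2 := Real.cos_le_one_sub_mul_cos_sq h2'
  have hsq : 0 < θ.1 ^ 2 + θ.2 ^ 2 := by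
    rcases eq_or_ne θ.1 0 with hθ1 | hθ1
    · have hθ2 : θ.2 ≠ 0 := by
        intro h; exact hne' (Prod.ext hθ1 h)
      positivity
    · positivity
  have hπ2 : (0:ℝ) < Real.pi ^ 2 := by positivity
  have hZ : (θ.1 ^ 2 + θ.2 ^ 2) / Real.pi ^ 2 ≤ Zsym θ := by
    rw [Zsym, div_le_iff₀ hπ2]
    have k1 : (2 / Real.pi ^ 2 * θ.1 ^ 2) * Real.pi ^ 2 ≤ (1 - Real.cos θ.1) * Real.pi ^ 2 :=
      mul_le_mul_of_nonneg_right (by linarith) hπ2.le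
    have k2 : (2 / Real.pi ^ 2 * θ.2 ^ 2) * Real.pi ^ 2 ≤ (1 - Real.cos θ.2) * Real.pi ^ 2 :=
      mul_le_mul_of_nonneg_right (by linarith) hπ2.le
    have e1 : (2 / Real.pi ^ 2 * θ.1 ^ 2) * Real.pi ^ 2 = 2 * θ.1 ^ 2 := by field_simp
    have e2 : (2 / Real.pi ^ 2 * θ.2 ^ 2) * Real.pi ^ 2 = 2 * θ.2 ^ 2 := by field_simp
    rw [e1] at k1; rw [e2] at k2
    nlinarith [k1, k2]
  have hZpos : 0 < Zsym θ := lt_of_lt_of_le (by positivity) hZ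
  set s : ℝ := latticeDot x θ with hs
  set a : ℝ := ‖Complex.exp (Complex.I * (θ.2 : ℂ)) - 1‖ with ha
  set b : ℝ := ‖Complex.exp (-Complex.I * (s : ℂ)) - 1‖ with hb
  have hann : 0 ≤ a := norm_nonneg _
  have hbnn : 0 ≤ b := norm_nonneg _
  have ha2 : a ^ 2 = 2 - 2 * Real.cos θ.2 := normsq_exp θ.2
  have hb2 : b ^ 2 = 2 - 2 * Real.cos s := by
    have h : -Complex.I * (s : ℂ) = Complex.I * ((-s : ℝ) : ℂ) := by push_cast; ring
    rw [hb, h, normsq_exp, Real.cos_neg]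
  have ha2' : a ^ 2 ≤ 4 * Zsym θ := by
    rw [ha2, Zsym]
    nlinarith [Real.cos_le_one θ.1]
  have hb2' : b ^ 2 ≤ s ^ 2 := by
    rw [hb2]
    nlinarith [Real.one_sub_sq_div_two_le_cos (x := s)]
  have hx1 : (x.1 : ℝ) ^ 2 ≤ M ^ 2 := by
    rw [hM]; nlinarith [sq_abs (x.1 : ℝ), abs_nonneg (x.1 : ℝ), abs_nonneg (x.2 : ℝ)]
  have hx2 : (x.2 : ℝ) ^ 2 ≤ M ^ 2 := by
    rw [hM]; nlinarith [sq_abs (x.2 : ℝ), abs_nonneg (x.1 : ℝ), abs_nonneg (x.2 : ℝ)]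
  have hsbound : s ^ 2 ≤ 2 * M ^ 2 * (θ.1 ^ 2 + θ.2 ^ 2) := by
    rw [hs, latticeDot]
    nlinarith [sq_nonneg ((x.1 : ℝ) * θ.1 - (x.2 : ℝ) * θ.2),
      mul_le_mul_of_nonneg_right hx1 (sq_nonneg θ.1),
      mul_le_mul_of_nonneg_right hx2 (sq_nonneg θ.2)]
  have hsbZ : s ^ 2 ≤ 2 * M ^ 2 * Real.pi ^ 2 * Zsym θ := by
    have h := (div_le_iff₀ hπ2).mp hZ
    calc s ^ 2 ≤ 2 * M ^ 2 * (θ.1 ^ 2 + θ.2 ^ 2) := hsbound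
      _ ≤ 2 * M ^ 2 * (Zsym θ * Real.pi ^ 2) := by
          apply mul_le_mul_of_nonneg_left h (by positivity)
      _ = 2 * M ^ 2 * Real.pi ^ 2 * Zsym θ := by ring
  have key : (a * b) ^ 2 ≤ (3 * Real.pi * (M + 1) * Zsym θ) ^ 2 := by
    calc (a * b) ^ 2 = a ^ 2 * b ^ 2 := by ring
      _ ≤ (4 * Zsym θ) * (2 * M ^ 2 * Real.pi ^ 2 * Zsym θ) :=
          mul_le_mul ha2' (hb2'.trans hsbZ) (sq_nonneg b) (by positivity)
      _ = 8 * Real.pi ^ 2 * M ^ 2 * Zsym θ ^ 2 := by ring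
      _ ≤ (3 * Real.pi * (M + 1) * Zsym θ) ^ 2 := by
          nlinarith [sq_nonneg (Real.pi * Zsym θ * M), sq_nonneg (Real.pi * Zsym θ),
            mul_nonneg (sq_nonneg (Real.pi * Zsym θ)) hMnn]
  have hCZ : 0 < 3 * Real.pi * (M + 1) * Zsym θ := by positivity
  nlinarith [key, mul_nonneg hann hbnn, hCZ]
end

section
/- Let Z(θ₁,θ₂) = 1 − (cos θ₁ + cos θ₂)/2, let a(x) = (2π)⁻² ∫_{(−π,π)²} (1 − cos(x·θ))/Z(θ) dθ for x ∈ ℤ², and define H_x(y) = a(x) + a(y) − a(x−y). Then for every x ∈ ℤ², Σ_{y∈ℤ²} ( (H_x(y+e₁) − H_x(y))² + (H_x(y+e₂) − H_x(y))² ) < ∞; that is, the Dirichlet energy of H_x on ℤ² is finite. -/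
open MeasureTheory

namespace Stmt12Aux

open Complex Set

lemma norm_exp_I_mul (a : ℝ) : ‖Complex.exp (Complex.I * (a : ℂ))‖ = 1 := by
  rw [mul_comm, Complex.norm_exp_ofReal_mul_I]

lemma norm_one_sub_exp_sq (r : ℝ) :
    ‖1 - Complex.exp (Complex.I * (r : ℂ))‖ ^ 2 = 2 * (1 - Real.cos r) := by
  rw [mul_comm, Complex.exp_mul_I, Complex.sq_norm]
  have h := Real.sin_sq_add_cos_sq r
  simp only [Complex.normSq_apply, Complex.sub_re, Complex.one_re, Complex.add_re,
    Complex.cos_ofReal_re, Complex.mul_re, Complex.sin_ofReal_re, Complex.I_re,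
    Complex.sin_ofReal_im, Complex.I_im, Complex.sub_im, Complex.one_im, Complex.add_im,
    Complex.cos_ofReal_im, Complex.mul_im]
  nlinarith [h]

lemma norm_one_sub_exp_neg (r : ℝ) :
    ‖1 - Complex.exp (Complex.I * ((-r : ℝ) : ℂ))‖ = ‖1 - Complex.exp (Complex.I * (r : ℂ))‖ := by
  have : (1 : ℂ) - Complex.exp (Complex.I * ((-r : ℝ) : ℂ)) =
      (starRingEnd ℂ) (1 - Complex.exp (Complex.I * (r : ℂ))) := by
    rw [map_sub, map_one, ← Complex.exp_conj]
    congr 1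
    simp [Complex.conj_I, Complex.conj_ofReal]
  rw [this, RCLike.norm_conj]

lemma norm_one_sub_mul {u v : ℂ} (hu : ‖u‖ = 1) : ‖1 - u * v‖ ≤ ‖1 - u‖ + ‖1 - v‖ := by
  have : (1 : ℂ) - u * v = (1 - u) + u * (1 - v) := by ring
  rw [this]
  refine (norm_add_le _ _).trans ?_
  rw [norm_mul, hu, one_mul]

lemma one_sub_exp_add (a b : ℝ) :
    ‖1 - Complex.exp (Complex.I * ((a + b : ℝ) : ℂ))‖ ≤
      ‖1 - Complex.exp (Complex.I * (a : ℂ))‖ + ‖1 - Complex.exp (Complex.I * (b : ℂ))‖ := by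
  have : Complex.exp (Complex.I * ((a + b : ℝ) : ℂ)) =
      Complex.exp (Complex.I * (a : ℂ)) * Complex.exp (Complex.I * (b : ℂ)) := by
    rw [← Complex.exp_add]; push_cast; ring_nf
  rw [this]
  exact norm_one_sub_mul (norm_exp_I_mul a)

lemma norm_one_sub_exp_nat (n : ℕ) (r : ℝ) :
    ‖1 - Complex.exp (Complex.I * (((n : ℝ) * r : ℝ) : ℂ))‖ ≤
      (n : ℝ) * ‖1 - Complex.exp (Complex.I * (r : ℂ))‖ := by
  induction n with
  | zero => norm_num
  | succ m ih =>
    have h1 : (((m : ℕ) + 1 : ℕ) : ℝ) * r = (m : ℝ) * r + r := by push_cast; ring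
    rw [h1]
    refine (one_sub_exp_add _ _).trans ?_
    push_cast at ih ⊢
    linarith [ih]

lemma norm_one_sub_exp_int (n : ℤ) (r : ℝ) :
    ‖1 - Complex.exp (Complex.I * (((n : ℝ) * r : ℝ) : ℂ))‖ ≤
      |(n : ℝ)| * ‖1 - Complex.exp (Complex.I * (r : ℂ))‖ := by
  rcases le_or_gt 0 n with hn | hn
  · lift n to ℕ using hn
    have := norm_one_sub_exp_nat n r
    push_cast at this ⊢
    rw [_root_.abs_of_nonneg (by positivity : (0:ℝ) ≤ (n:ℝ))]
    exact this
  · obtain ⟨m, hm⟩ : ∃ m : ℕ, n = -(m : ℤ) := ⟨n.natAbs, by omega⟩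
    subst hm
    have h1 : ((-(m : ℤ) : ℤ) : ℝ) * r = -((m : ℝ) * r) := by push_cast; ring
    rw [h1, norm_one_sub_exp_neg ((m : ℝ) * r)]
    rw [show |((-(m : ℤ) : ℤ) : ℝ)| = (m : ℝ) by push_cast; rw [abs_neg, abs_eq_self]; positivity]
    exact norm_one_sub_exp_nat m r


/-- The box `(-π, π)²`. -/
def box : Set (ℝ × ℝ) := Set.Ioo (-Real.pi) Real.pi ×ˢ Set.Ioo (-Real.pi) Real.pi

noncomputable def μbox : Measure (ℝ × ℝ) := volume.restrict box

instance : IsFiniteMeasure μbox := by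
  constructor
  rw [μbox, Measure.restrict_apply_univ]
  refine lt_of_le_of_lt (measure_mono ?_) (isCompact_Icc (α := ℝ × ℝ)
    (a := (-Real.pi, -Real.pi)) (b := (Real.pi, Real.pi))).measure_lt_top
  rw [box, ← Set.Icc_prod_Icc]
  exact Set.prod_mono Set.Ioo_subset_Icc_self Set.Ioo_subset_Icc_self

lemma integral_exp_Ioo (n : ℤ) :
    ∫ t in Set.Ioo (-Real.pi) Real.pi, Complex.exp (Complex.I * (n : ℂ) * (t : ℂ)) =
      if n = 0 then ((2 * Real.pi : ℝ) : ℂ) else 0 := by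
  rcases eq_or_ne n 0 with hn | hn
  · subst hn
    simp only [Int.cast_zero, mul_zero, zero_mul, Complex.exp_zero, if_pos rfl]
    rw [setIntegral_const]
    simp [Real.volume_Ioo, smul_eq_mul]
    rw [max_eq_left (by positivity)]
    push_cast; ring
  · rw [if_neg hn, ← integral_Ioc_eq_integral_Ioo,
      ← intervalIntegral.integral_of_le (by linarith [Real.pi_pos] : -Real.pi ≤ Real.pi)]
    have hc : (Complex.I * (n : ℂ)) ≠ 0 := by
      simp [Complex.I_ne_zero, Complex.ext_iff]
      exact_mod_cast hn
    have := integral_exp_mul_complex hc (a := -Real.pi) (b := Real.pi)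
    simp only [mul_assoc] at this ⊢
    rw [this]
    rw [div_eq_zero_iff]
    left
    have h2 : Complex.exp (Complex.I * ((n : ℂ) * (Real.pi : ℂ))) =
        Complex.exp (Complex.I * ((n : ℂ) * ((-Real.pi : ℝ) : ℂ))) *
          Complex.exp ((n : ℂ) * (2 * (Real.pi : ℂ) * Complex.I)) := by
      rw [← Complex.exp_add]
      congr 1
      push_cast; ring
    rw [h2, Complex.exp_int_mul_two_pi_mul_I, mul_one, sub_self]

lemma integral_exp_box (k : ℤ × ℤ) :
    ∫ θ in box, Complex.exp (Complex.I * (latticeDot k θ : ℂ)) =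
      if k = 0 then (((2 * Real.pi) ^ 2 : ℝ) : ℂ) else 0 := by
  have heq : ∀ θ : ℝ × ℝ, Complex.exp (Complex.I * (latticeDot k θ : ℂ)) =
      Complex.exp (Complex.I * (k.1 : ℂ) * (θ.1 : ℂ)) *
        Complex.exp (Complex.I * (k.2 : ℂ) * (θ.2 : ℂ)) := by
    intro θ
    rw [← Complex.exp_add]
    congr 1
    simp only [latticeDot]
    push_cast; ring
  rw [show (∫ θ in box, Complex.exp (Complex.I * (latticeDot k θ : ℂ))) =
      ∫ θ in box, Complex.exp (Complex.I * (k.1 : ℂ) * (θ.1 : ℂ)) *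
        Complex.exp (Complex.I * (k.2 : ℂ) * (θ.2 : ℂ)) from integral_congr_ae
          (Filter.EventuallyEq.of_eq (funext heq))]
  rw [box, MeasureTheory.Measure.volume_eq_prod]
  have hprod := MeasureTheory.setIntegral_prod_mul (μ := (volume : Measure ℝ))
    (ν := (volume : Measure ℝ))
    (f := fun t : ℝ => Complex.exp (Complex.I * (k.1 : ℂ) * (t : ℂ)))
    (g := fun t : ℝ => Complex.exp (Complex.I * (k.2 : ℂ) * (t : ℂ)))
    (Set.Ioo (-Real.pi) Real.pi) (Set.Ioo (-Real.pi) Real.pi)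
  rw [hprod, integral_exp_Ioo, integral_exp_Ioo]
  rcases eq_or_ne k 0 with hk | hk
  · subst hk
    simp only [Prod.fst_zero, Prod.snd_zero, if_pos rfl, if_pos rfl]
    push_cast; ring
  · rw [if_neg hk]
    have hor : k.1 ≠ 0 ∨ k.2 ≠ 0 := by
      by_contra hcon
      push_neg at hcon
      exact hk (by rw [Prod.ext_iff]; simp [hcon.1, hcon.2])
    rcases hor with h | h
    · rw [if_neg h, zero_mul]
    · rw [if_neg h, mul_zero]

/-- The normalized characters `θ ↦ (2π)⁻¹ e^{i y·θ}`. -/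
noncomputable def efn (y : ℤ × ℤ) (θ : ℝ × ℝ) : ℂ :=
  (((2 * Real.pi)⁻¹ : ℝ) : ℂ) * Complex.exp (Complex.I * (latticeDot y θ : ℂ))

lemma measurable_efn (y : ℤ × ℤ) : Measurable (efn y) := by
  apply Measurable.const_mul
  apply Complex.measurable_exp.comp
  apply Measurable.const_mul
  exact Complex.measurable_ofReal.comp (by unfold latticeDot; fun_prop)

lemma norm_efn_le (y : ℤ × ℤ) (θ : ℝ × ℝ) : ‖efn y θ‖ ≤ (2 * Real.pi)⁻¹ := by
  rw [efn, norm_mul, norm_exp_I_mul, mul_one, Complex.norm_real, Real.norm_eq_abs,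
    _root_.abs_of_nonneg (by positivity)]

lemma memℒp_efn (y : ℤ × ℤ) : MemLp (efn y) 2 μbox :=
  MemLp.of_bound (measurable_efn y).aestronglyMeasurable _ (ae_of_all _ (norm_efn_le y))

noncomputable def Efn (y : ℤ × ℤ) : Lp ℂ 2 μbox := (memℒp_efn y).toLp _

lemma latticeDot_sub (a b : ℤ × ℤ) (θ : ℝ × ℝ) :
    latticeDot (a - b) θ = latticeDot a θ - latticeDot b θ := by
  simp only [latticeDot, Prod.fst_sub, Prod.snd_sub]
  push_cast; ring

lemma orthonormal_Efn : Orthonormal ℂ Efn := by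
  rw [orthonormal_iff_ite]
  intro y y'
  have h1 : (inner ℂ (Efn y) (Efn y') : ℂ) = ∫ θ, (starRingEnd ℂ) (efn y θ) * efn y' θ ∂μbox := by
    rw [MeasureTheory.L2.inner_def]
    apply integral_congr_ae
    filter_upwards [(memℒp_efn y).coeFn_toLp, (memℒp_efn y').coeFn_toLp] with θ h h'
    rw [RCLike.inner_apply, Efn, Efn, h, h', mul_comm]
  have h2 : ∀ θ, (starRingEnd ℂ) (efn y θ) * efn y' θ =
      ((((2 * Real.pi)⁻¹ : ℝ)^2 : ℝ) : ℂ) * Complex.exp (Complex.I * (latticeDot (y' - y) θ : ℂ)) := by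
    intro θ
    rw [efn, efn, map_mul, ← Complex.exp_conj]
    rw [show (starRingEnd ℂ) (Complex.I * (latticeDot y θ : ℂ)) =
        -(Complex.I * (latticeDot y θ : ℂ)) by
      rw [map_mul, Complex.conj_I, Complex.conj_ofReal]; ring]
    rw [Complex.conj_ofReal]
    rw [show (((2 * Real.pi)⁻¹ : ℝ) : ℂ) * Complex.exp (-(Complex.I * (latticeDot y θ : ℂ))) *
        ((((2 * Real.pi)⁻¹ : ℝ) : ℂ) * Complex.exp (Complex.I * (latticeDot y' θ : ℂ))) =
        ((((2 * Real.pi)⁻¹ : ℝ) : ℂ) * (((2 * Real.pi)⁻¹ : ℝ) : ℂ)) *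
          (Complex.exp (-(Complex.I * (latticeDot y θ : ℂ)) + Complex.I * (latticeDot y' θ : ℂ)))
        by rw [Complex.exp_add]; ring]
    congr 1
    · push_cast; ring
    · congr 1
      rw [latticeDot_sub]
      push_cast; ring
  rw [h1, integral_congr_ae (Filter.EventuallyEq.of_eq (funext h2)), integral_const_mul,
    μbox]
  rw [integral_exp_box]
  rcases eq_or_ne y y' with h | h
  · subst h
    rw [if_pos (sub_self y), if_pos rfl]
    norm_cast
    rw [← mul_pow, inv_mul_cancel₀ (by positivity : (2 * Real.pi) ≠ 0)]
    norm_num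
  · rw [if_neg (sub_ne_zero.mpr (Ne.symm h)), if_neg h, mul_zero]


/-- The bounded function on the torus whose Fourier coefficients are the
coordinate differences of `H_x`. -/
noncomputable def gfun (x e : ℤ × ℤ) (θ : ℝ × ℝ) : ℂ :=
  (1 - Complex.exp (Complex.I * (latticeDot e θ : ℂ))) *
    (1 - Complex.exp (Complex.I * ((-latticeDot x θ : ℝ) : ℂ))) / ((Zsym θ : ℝ) : ℂ)

lemma Zsym_nonneg (θ : ℝ × ℝ) : 0 ≤ Zsym θ := by
  have h1 := Real.cos_le_one θ.1
  have h2 := Real.cos_le_one θ.2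
  simp only [Zsym]; linarith

lemma sum_sq_eq_Zsym (θ : ℝ × ℝ) :
    ‖1 - Complex.exp (Complex.I * (θ.1 : ℂ))‖ ^ 2 + ‖1 - Complex.exp (Complex.I * (θ.2 : ℂ))‖ ^ 2
      = 4 * Zsym θ := by
  rw [norm_one_sub_exp_sq, norm_one_sub_exp_sq, Zsym]; ring

lemma norm_one_sub_exp_dot_le (x : ℤ × ℤ) (θ : ℝ × ℝ) :
    ‖1 - Complex.exp (Complex.I * (latticeDot x θ : ℂ))‖ ≤
      |(x.1 : ℝ)| * ‖1 - Complex.exp (Complex.I * (θ.1 : ℂ))‖ +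
        |(x.2 : ℝ)| * ‖1 - Complex.exp (Complex.I * (θ.2 : ℂ))‖ := by
  have h : latticeDot x θ = (x.1 : ℝ) * θ.1 + (x.2 : ℝ) * θ.2 := rfl
  rw [h]
  refine (one_sub_exp_add _ _).trans ?_
  exact add_le_add (norm_one_sub_exp_int x.1 θ.1) (norm_one_sub_exp_int x.2 θ.2)

lemma norm_gfun_le (x e : ℤ × ℤ)
    (he : ∀ θ : ℝ × ℝ, ‖1 - Complex.exp (Complex.I * (latticeDot e θ : ℂ))‖ ^ 2 ≤ 4 * Zsym θ)
    (θ : ℝ × ℝ) :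
    ‖gfun x e θ‖ ≤ 4 * (|(x.1 : ℝ)| + |(x.2 : ℝ)| + 1) := by
  rcases eq_or_lt_of_le (Zsym_nonneg θ) with hZ | hZ
  · rw [gfun, ← hZ]
    norm_num
    positivity
  · set Z := Zsym θ with hZdef
    set u := ‖1 - Complex.exp (Complex.I * (latticeDot e θ : ℂ))‖ with hu
    set u1 := ‖1 - Complex.exp (Complex.I * (θ.1 : ℂ))‖ with hu1
    set u2 := ‖1 - Complex.exp (Complex.I * (θ.2 : ℂ))‖ with hu2
    have hsum := sum_sq_eq_Zsym θ
    have hue := he θ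
    have hu1Z : u1 ^ 2 ≤ 4 * Z := by nlinarith [sq_nonneg u2]
    have hu2Z : u2 ^ 2 ≤ 4 * Z := by nlinarith [sq_nonneg u1]
    have hw : ‖1 - Complex.exp (Complex.I * ((-latticeDot x θ : ℝ) : ℂ))‖ ≤
        |(x.1 : ℝ)| * u1 + |(x.2 : ℝ)| * u2 := by
      rw [norm_one_sub_exp_neg]
      exact norm_one_sub_exp_dot_le x θ
    have hnorm : ‖gfun x e θ‖ =
        u * ‖1 - Complex.exp (Complex.I * ((-latticeDot x θ : ℝ) : ℂ))‖ / Z := by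
      rw [gfun, norm_div, norm_mul, Complex.norm_real, Real.norm_eq_abs,
        _root_.abs_of_nonneg (le_of_lt hZ)]
    rw [hnorm, div_le_iff₀ hZ]
    have hun : 0 ≤ u := norm_nonneg _
    have hu1n : 0 ≤ u1 := norm_nonneg _
    have hu2n : 0 ≤ u2 := norm_nonneg _
    have hwn : 0 ≤ ‖1 - Complex.exp (Complex.I * ((-latticeDot x θ : ℝ) : ℂ))‖ := norm_nonneg _
    have ha : (0:ℝ) ≤ |(x.1 : ℝ)| := abs_nonneg _
    have hb : (0:ℝ) ≤ |(x.2 : ℝ)| := abs_nonneg _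
    have huu1 : u * u1 ≤ 4 * Z := by nlinarith [sq_nonneg (u - u1)]
    have huu2 : u * u2 ≤ 4 * Z := by nlinarith [sq_nonneg (u - u2)]
    calc u * ‖1 - Complex.exp (Complex.I * ((-latticeDot x θ : ℝ) : ℂ))‖
        ≤ u * (|(x.1 : ℝ)| * u1 + |(x.2 : ℝ)| * u2) := by
          exact mul_le_mul_of_nonneg_left hw hun
      _ = |(x.1 : ℝ)| * (u * u1) + |(x.2 : ℝ)| * (u * u2) := by ring
      _ ≤ |(x.1 : ℝ)| * (4 * Z) + |(x.2 : ℝ)| * (4 * Z) := by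
          exact add_le_add (mul_le_mul_of_nonneg_left huu1 ha)
            (mul_le_mul_of_nonneg_left huu2 hb)
      _ ≤ 4 * (|(x.1 : ℝ)| + |(x.2 : ℝ)| + 1) * Z := by nlinarith
lemma measurable_gfun (x e : ℤ × ℤ) : Measurable (gfun x e) := by
  unfold gfun Zsym latticeDot
  fun_prop

lemma memℒp_gfun (x e : ℤ × ℤ)
    (he : ∀ θ : ℝ × ℝ, ‖1 - Complex.exp (Complex.I * (latticeDot e θ : ℂ))‖ ^ 2 ≤ 4 * Zsym θ) :
    MemLp (gfun x e) 2 μbox :=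
  MemLp.of_bound (measurable_gfun x e).aestronglyMeasurable _ (ae_of_all _ (norm_gfun_le x e he))

lemma real_ineq_fz (a b u1 u2 W Z : ℝ) (ha : 0 ≤ a) (hb : 0 ≤ b)
    (hW : 0 ≤ W) (hZ : 0 < Z) (hsum : u1^2 + u2^2 = 4*Z) (hw : W ≤ a*u1 + b*u2) :
    W^2/2 ≤ (2*(a+b)^2 + 1) * Z := by
  have hCS : (a*u1 + b*u2)^2 ≤ (a^2 + b^2) * (4*Z) := by nlinarith [sq_nonneg (a*u2 - b*u1)]
  have hab : a^2 + b^2 ≤ (a+b)^2 := by nlinarith [mul_nonneg ha hb]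
  have hWsq : W^2 ≤ (a*u1 + b*u2)^2 := by nlinarith
  nlinarith [mul_le_mul_of_nonneg_right hab (by positivity : (0:ℝ) ≤ 4*Z)]

lemma integrable_fz (z : ℤ × ℤ) :
    Integrable (fun θ => (1 - Real.cos (latticeDot z θ)) / Zsym θ) μbox := by
  rw [← memLp_one_iff_integrable]
  refine MemLp.of_bound ?_ (2 * (|(z.1 : ℝ)| + |(z.2 : ℝ)|) ^ 2 + 1) (ae_of_all _ ?_)
  · apply Measurable.aestronglyMeasurable
    unfold Zsym latticeDot
    fun_prop
  · intro θ
    rcases eq_or_lt_of_le (Zsym_nonneg θ) with hZ | hZ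
    · rw [← hZ]
      norm_num
      positivity
    · have hcos : 1 - Real.cos (latticeDot z θ) =
          ‖1 - Complex.exp (Complex.I * (latticeDot z θ : ℂ))‖ ^ 2 / 2 := by
        rw [norm_one_sub_exp_sq]; ring
      have hnum : 0 ≤ 1 - Real.cos (latticeDot z θ) := by
        rw [hcos]; positivity
      rw [Real.norm_eq_abs, _root_.abs_of_nonneg (div_nonneg hnum (le_of_lt hZ)),
        div_le_iff₀ hZ, hcos]
      exact real_ineq_fz _ _ _ _ _ _ (abs_nonneg _) (abs_nonneg _) (norm_nonneg _) hZ
        (sum_sq_eq_Zsym θ) (norm_one_sub_exp_dot_le z θ)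


lemma latticeDot_add (a b : ℤ × ℤ) (θ : ℝ × ℝ) :
    latticeDot (a + b) θ = latticeDot a θ + latticeDot b θ := by
  simp only [latticeDot, Prod.fst_add, Prod.snd_add]
  push_cast; ring

lemma latticeDot_neg (a : ℤ × ℤ) (θ : ℝ × ℝ) :
    latticeDot (-a) θ = -latticeDot a θ := by
  simp only [latticeDot, Prod.fst_neg, Prod.snd_neg]
  push_cast; ring

lemma core (A T B Z : ℝ) :
    (Complex.exp (Complex.I * (A:ℂ)) *
      ((1 - Complex.exp (Complex.I * (T:ℂ))) * (1 - Complex.exp (Complex.I * ((-B : ℝ):ℂ))) / ((Z:ℝ):ℂ))).re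
    = (Real.cos A - Real.cos (A+T) - Real.cos (B-A) + Real.cos (B-(A+T))) / Z := by
  rw [← mul_div_assoc]
  have key : Complex.exp (Complex.I * (A:ℂ)) *
      ((1 - Complex.exp (Complex.I * (T:ℂ))) * (1 - Complex.exp (Complex.I * ((-B : ℝ):ℂ)))) =
      Complex.exp (((A : ℝ) : ℂ) * Complex.I) - Complex.exp (((A + T : ℝ) : ℂ) * Complex.I)
        - Complex.exp (((A - B : ℝ) : ℂ) * Complex.I)
        + Complex.exp (((A + T - B : ℝ) : ℂ) * Complex.I) := by
    push_cast
    rw [show ((A:ℂ)+T)*Complex.I = A*Complex.I + T*Complex.I by ring,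
        show ((A:ℂ)-B)*Complex.I = A*Complex.I + -B*Complex.I by ring,
        show ((A:ℂ)+T-B)*Complex.I = A*Complex.I + T*Complex.I + -B*Complex.I by ring]
    rw [Complex.exp_add, Complex.exp_add, Complex.exp_add, Complex.exp_add]
    rw [show Complex.I * (A:ℂ) = (A:ℂ) * Complex.I by ring,
        show Complex.I * (T:ℂ) = (T:ℂ) * Complex.I by ring,
        show Complex.I * (-(B:ℂ)) = -B * Complex.I by ring]
    ring
  rw [key, Complex.div_ofReal_re]
  congr 1
  simp only [Complex.add_re, Complex.sub_re, Complex.exp_ofReal_mul_I_re]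
  rw [show B - A = -(A - B) by ring, show B - (A+T) = -(A+T-B) by ring,
    Real.cos_neg, Real.cos_neg]

lemma pointwise_eq (x e y : ℤ × ℤ) (θ : ℝ × ℝ) :
    (1 - Real.cos (latticeDot (y + e) θ)) / Zsym θ - (1 - Real.cos (latticeDot y θ)) / Zsym θ
      - (1 - Real.cos (latticeDot (x - (y + e)) θ)) / Zsym θ
      + (1 - Real.cos (latticeDot (x - y) θ)) / Zsym θ
    = (Complex.exp (Complex.I * (latticeDot y θ : ℂ)) * gfun x e θ).re := by
  rw [gfun, core (latticeDot y θ) (latticeDot e θ) (latticeDot x θ) (Zsym θ)]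
  simp only [latticeDot_sub, latticeDot_add]
  ring

lemma potentialKernel_eq (z : ℤ × ℤ) :
    potentialKernel z =
      ((2 * Real.pi) ^ 2)⁻¹ * ∫ θ, (1 - Real.cos (latticeDot z θ)) / Zsym θ ∂μbox := rfl

lemma diff_eq (x e y : ℤ × ℤ) :
    greenFn x (y + e) - greenFn x y =
      ((2 * Real.pi) ^ 2)⁻¹ *
        ∫ θ, (Complex.exp (Complex.I * (latticeDot y θ : ℂ)) * gfun x e θ).re ∂μbox := by
  have h1 : Integrable (fun θ => (1 - Real.cos (latticeDot (y + e) θ)) / Zsym θ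
      - (1 - Real.cos (latticeDot y θ)) / Zsym θ) μbox :=
    (integrable_fz _).sub (integrable_fz _)
  have h2 : Integrable (fun θ => (1 - Real.cos (latticeDot (y + e) θ)) / Zsym θ
      - (1 - Real.cos (latticeDot y θ)) / Zsym θ
      - (1 - Real.cos (latticeDot (x - (y + e)) θ)) / Zsym θ) μbox :=
    h1.sub (integrable_fz _)
  have hI : (∫ θ, ((1 - Real.cos (latticeDot (y + e) θ)) / Zsym θ
        - (1 - Real.cos (latticeDot y θ)) / Zsym θ
        - (1 - Real.cos (latticeDot (x - (y + e)) θ)) / Zsym θ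
        + (1 - Real.cos (latticeDot (x - y) θ)) / Zsym θ) ∂μbox)
      = (∫ θ, (1 - Real.cos (latticeDot (y + e) θ)) / Zsym θ ∂μbox)
        - (∫ θ, (1 - Real.cos (latticeDot y θ)) / Zsym θ ∂μbox)
        - (∫ θ, (1 - Real.cos (latticeDot (x - (y + e)) θ)) / Zsym θ ∂μbox)
        + (∫ θ, (1 - Real.cos (latticeDot (x - y) θ)) / Zsym θ ∂μbox) := by
    rw [integral_add h2 (integrable_fz _), integral_sub h1 (integrable_fz _),
      integral_sub (integrable_fz _) (integrable_fz _)]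
  have hcong : (∫ θ, ((1 - Real.cos (latticeDot (y + e) θ)) / Zsym θ
        - (1 - Real.cos (latticeDot y θ)) / Zsym θ
        - (1 - Real.cos (latticeDot (x - (y + e)) θ)) / Zsym θ
        + (1 - Real.cos (latticeDot (x - y) θ)) / Zsym θ) ∂μbox)
      = ∫ θ, (Complex.exp (Complex.I * (latticeDot y θ : ℂ)) * gfun x e θ).re ∂μbox :=
    integral_congr_ae (Filter.EventuallyEq.of_eq (funext (pointwise_eq x e y)))
  rw [← hcong, hI]
  simp only [greenFn, potentialKernel_eq]
  ring

lemma measurable_exp_dot (y : ℤ × ℤ) :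
    Measurable (fun θ : ℝ × ℝ => Complex.exp (Complex.I * (latticeDot y θ : ℂ))) := by
  apply Complex.measurable_exp.comp
  apply Measurable.const_mul
  exact Complex.measurable_ofReal.comp (by unfold latticeDot; fun_prop)

lemma integrable_exp_mul_gfun (x e y : ℤ × ℤ)
    (he : ∀ θ : ℝ × ℝ, ‖1 - Complex.exp (Complex.I * (latticeDot e θ : ℂ))‖ ^ 2 ≤ 4 * Zsym θ) :
    Integrable (fun θ => Complex.exp (Complex.I * (latticeDot y θ : ℂ)) * gfun x e θ) μbox := by
  rw [← memLp_one_iff_integrable]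
  refine MemLp.of_bound ?_ (4 * (|(x.1 : ℝ)| + |(x.2 : ℝ)| + 1)) (ae_of_all _ ?_)
  · exact ((measurable_exp_dot y).mul (measurable_gfun x e)).aestronglyMeasurable
  · intro θ
    rw [norm_mul, norm_exp_I_mul, one_mul]
    exact norm_gfun_le x e he θ

lemma diff_eq_inner (x e y : ℤ × ℤ)
    (he : ∀ θ : ℝ × ℝ, ‖1 - Complex.exp (Complex.I * (latticeDot e θ : ℂ))‖ ^ 2 ≤ 4 * Zsym θ) :
    greenFn x (y + e) - greenFn x y =
      (2 * Real.pi)⁻¹ * (inner ℂ (Efn (-y)) ((memℒp_gfun x e he).toLp _) : ℂ).re := by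
  have hinner : (inner ℂ (Efn (-y)) ((memℒp_gfun x e he).toLp _) : ℂ) =
      ∫ θ, (starRingEnd ℂ) (efn (-y) θ) * gfun x e θ ∂μbox := by
    rw [MeasureTheory.L2.inner_def]
    apply integral_congr_ae
    filter_upwards [(memℒp_efn (-y)).coeFn_toLp, (memℒp_gfun x e he).coeFn_toLp] with θ h h'
    rw [RCLike.inner_apply, Efn, h, h', mul_comm]
  have hc : ∀ θ : ℝ × ℝ, (starRingEnd ℂ) (efn (-y) θ) * gfun x e θ =
      (((2 * Real.pi)⁻¹ : ℝ) : ℂ) *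
        (Complex.exp (Complex.I * (latticeDot y θ : ℂ)) * gfun x e θ) := by
    intro θ
    rw [efn, map_mul, Complex.conj_ofReal, ← Complex.exp_conj,
      show (starRingEnd ℂ) (Complex.I * ((latticeDot (-y) θ : ℝ) : ℂ)) =
          Complex.I * ((latticeDot y θ : ℝ) : ℂ) by
        rw [map_mul, Complex.conj_I, Complex.conj_ofReal, latticeDot_neg]
        push_cast; ring]
    ring
  have hre := integral_re (𝕜 := ℂ) (integrable_exp_mul_gfun x e y he)
  simp only [RCLike.re_to_complex] at hre
  rw [hinner, integral_congr_ae (Filter.EventuallyEq.of_eq (funext hc)), integral_const_mul,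
    Complex.re_ofReal_mul, ← hre, diff_eq x e y]
  rw [pow_two, mul_inv]
  ring

lemma sq_re_le_norm_sq (z : ℂ) : z.re ^ 2 ≤ ‖z‖ ^ 2 := by
  rw [← _root_.sq_abs z.re]
  apply pow_le_pow_left₀ (abs_nonneg _)
  exact Complex.abs_re_le_norm z

lemma partial_sum_le (x e : ℤ × ℤ)
    (he : ∀ θ : ℝ × ℝ, ‖1 - Complex.exp (Complex.I * (latticeDot e θ : ℂ))‖ ^ 2 ≤ 4 * Zsym θ)
    (S : Finset (ℤ × ℤ)) :
    ∑ y ∈ S, (greenFn x (y + e) - greenFn x y) ^ 2 ≤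
      ((2 * Real.pi)⁻¹) ^ 2 * ‖(memℒp_gfun x e he).toLp _‖ ^ 2 := by
  set G := (memℒp_gfun x e he).toLp _ with hG
  have hON : Orthonormal ℂ (Efn ∘ (fun y : ℤ × ℤ => -y)) :=
    orthonormal_Efn.comp _ neg_injective
  calc ∑ y ∈ S, (greenFn x (y + e) - greenFn x y) ^ 2
      = ∑ y ∈ S, ((2 * Real.pi)⁻¹) ^ 2 * ((inner ℂ (Efn (-y)) G : ℂ).re) ^ 2 := by
        apply Finset.sum_congr rfl
        intro y _
        rw [diff_eq_inner x e y he, mul_pow, ← hG]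
    _ ≤ ∑ y ∈ S, ((2 * Real.pi)⁻¹) ^ 2 * ‖(inner ℂ ((Efn ∘ (fun y : ℤ × ℤ => -y)) y) G : ℂ)‖ ^ 2 := by
        apply Finset.sum_le_sum
        intro y _
        exact mul_le_mul_of_nonneg_left (sq_re_le_norm_sq _) (by positivity)
    _ = ((2 * Real.pi)⁻¹) ^ 2 * ∑ y ∈ S, ‖(inner ℂ ((Efn ∘ (fun y : ℤ × ℤ => -y)) y) G : ℂ)‖ ^ 2 := by
        rw [Finset.mul_sum]
    _ ≤ ((2 * Real.pi)⁻¹) ^ 2 * ‖G‖ ^ 2 :=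
        mul_le_mul_of_nonneg_left (hON.sum_inner_products_le G) (by positivity)

end Stmt12Aux

/-- Proposition 3.2, main quantitative part: the coordinate differences of the
Green-type function `H_x` are square-summable over `ℤ²`, i.e. `H_x` has finite
Dirichlet energy. -/
theorem stmt12 (x : ℤ × ℤ) :
    Summable (fun y : ℤ × ℤ =>
      (greenFn x (y + (1, 0)) - greenFn x y) ^ 2 +
        (greenFn x (y + (0, 1)) - greenFn x y) ^ 2) := by
  have he1 : ∀ θ : ℝ × ℝ,
      ‖1 - Complex.exp (Complex.I * (latticeDot ((1, 0) : ℤ × ℤ) θ : ℂ))‖ ^ 2 ≤ 4 * Zsym θ := by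
    intro θ
    have h : latticeDot ((1, 0) : ℤ × ℤ) θ = θ.1 := by simp [latticeDot]
    rw [h, Stmt12Aux.norm_one_sub_exp_sq]
    have := Real.cos_le_one θ.2
    simp only [Zsym]; linarith
  have he2 : ∀ θ : ℝ × ℝ,
      ‖1 - Complex.exp (Complex.I * (latticeDot ((0, 1) : ℤ × ℤ) θ : ℂ))‖ ^ 2 ≤ 4 * Zsym θ := by
    intro θ
    have h : latticeDot ((0, 1) : ℤ × ℤ) θ = θ.2 := by simp [latticeDot]
    rw [h, Stmt12Aux.norm_one_sub_exp_sq]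
    have := Real.cos_le_one θ.1
    simp only [Zsym]; linarith
  refine summable_of_sum_le (c :=
      ((2 * Real.pi)⁻¹) ^ 2 * ‖(Stmt12Aux.memℒp_gfun x ((1, 0) : ℤ × ℤ) he1).toLp _‖ ^ 2 +
        ((2 * Real.pi)⁻¹) ^ 2 * ‖(Stmt12Aux.memℒp_gfun x ((0, 1) : ℤ × ℤ) he2).toLp _‖ ^ 2)
    (fun y => by positivity) ?_
  intro S
  rw [Finset.sum_add_distrib]
  exact add_le_add (Stmt12Aux.partial_sum_le x (1, 0) he1 S)
    (Stmt12Aux.partial_sum_le x (0, 1) he2 S)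
end

section
/- Let Z(θ₁,θ₂) = 1 − (cos θ₁ + cos θ₂)/2 and a(x) = (2π)⁻² ∫_{(−π,π)²} (1 − cos(x·θ))/Z(θ) dθ for x ∈ ℤ². Then for every fixed x ∈ ℤ², a(y) − a(y−x) → 0 as ‖y‖ → ∞ (y ∈ ℤ², ‖y‖ the Euclidean norm); consequently, for H_x(y) = a(x) + a(y) − a(x−y) one has H_x(y) → a(x) as ‖y‖ → ∞. -/
open MeasureTheory

/-! ### Auxiliary material -/

open scoped FourierTransform Real
open Filter Set
open scoped Topology

namespace Stmt16Aux

/-- The fundamental domain. -/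
def box : Set (ℝ × ℝ) := Set.Ioo (-Real.pi) Real.pi ×ˢ Set.Ioo (-Real.pi) Real.pi

lemma measurableSet_box : MeasurableSet box :=
  measurableSet_Ioo.prod measurableSet_Ioo

lemma volume_box_lt_top : volume box < ⊤ := by
  rw [box, Measure.volume_eq_prod, Measure.prod_prod, Real.volume_Ioo]
  exact ENNReal.mul_lt_top ENNReal.ofReal_lt_top ENNReal.ofReal_lt_top

lemma Zsym_lower {θ : ℝ × ℝ} (hθ : θ ∈ box) :
    (θ.1 ^ 2 + θ.2 ^ 2) / Real.pi ^ 2 ≤ Zsym θ := by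
  obtain ⟨h1, h2⟩ := hθ
  have a1 : |θ.1| ≤ Real.pi := abs_le.2 ⟨h1.1.le, h1.2.le⟩
  have a2 : |θ.2| ≤ Real.pi := abs_le.2 ⟨h2.1.le, h2.2.le⟩
  have c1 := Real.cos_le_one_sub_mul_cos_sq a1
  have c2 := Real.cos_le_one_sub_mul_cos_sq a2
  have hπ : (0:ℝ) < Real.pi ^ 2 := by positivity
  rw [div_le_iff₀ hπ, Zsym]
  have e1 : 2 / Real.pi ^ 2 * θ.1 ^ 2 * Real.pi ^ 2 = 2 * θ.1 ^ 2 := by field_simp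
  have e2 : 2 / Real.pi ^ 2 * θ.2 ^ 2 * Real.pi ^ 2 = 2 * θ.2 ^ 2 := by field_simp
  nlinarith [mul_le_mul_of_nonneg_right c1 hπ.le, mul_le_mul_of_nonneg_right c2 hπ.le]

lemma bound_cos (z : ℤ × ℤ) {θ : ℝ × ℝ} (hθ : θ ∈ box) :
    ‖(1 - Real.cos (latticeDot z θ)) / Zsym θ‖ ≤
      ((z.1 : ℝ) ^ 2 + (z.2 : ℝ) ^ 2) * Real.pi ^ 2 / 2 := by
  rcases eq_or_ne (θ.1 ^ 2 + θ.2 ^ 2) 0 with h0 | h0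
  · have h1 : θ.1 = 0 := by nlinarith [sq_nonneg θ.1, sq_nonneg θ.2]
    have h2 : θ.2 = 0 := by nlinarith [sq_nonneg θ.1, sq_nonneg θ.2]
    simp only [latticeDot, h1, h2, mul_zero, add_zero, Real.cos_zero, sub_self, zero_div,
      norm_zero]
    positivity
  · have hS : 0 < θ.1 ^ 2 + θ.2 ^ 2 := lt_of_le_of_ne (by positivity) (Ne.symm h0)
    have hZ := Zsym_lower hθ
    have hZpos : 0 < Zsym θ := lt_of_lt_of_le (by positivity) hZ
    have hnum : 0 ≤ 1 - Real.cos (latticeDot z θ) := by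
      nlinarith [Real.cos_le_one (latticeDot z θ)]
    rw [Real.norm_eq_abs, abs_of_nonneg (div_nonneg hnum hZpos.le), div_le_iff₀ hZpos]
    have hcs : (latticeDot z θ) ^ 2 ≤ ((z.1:ℝ)^2 + (z.2:ℝ)^2) * (θ.1^2 + θ.2^2) := by
      unfold latticeDot
      nlinarith [sq_nonneg ((z.1:ℝ) * θ.2 - (z.2:ℝ) * θ.1)]
    have hub := Real.one_sub_sq_div_two_le_cos (x := latticeDot z θ)
    have hZ' : θ.1^2 + θ.2^2 ≤ Zsym θ * Real.pi ^ 2 := by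
      rw [div_le_iff₀ (by positivity : (0:ℝ) < Real.pi ^ 2)] at hZ; linarith
    nlinarith [mul_le_mul_of_nonneg_left hZ'
      (by positivity : (0:ℝ) ≤ ((z.1:ℝ)^2 + (z.2:ℝ)^2) / 2)]

lemma bound_sin (z : ℤ × ℤ) {θ : ℝ × ℝ} (hθ : θ ∈ box) (h1 : θ.1 ≠ 0) (h2 : θ.2 ≠ 0) :
    ‖Real.sin (latticeDot z θ) / Zsym θ‖ ≤
      ((|(z.1:ℝ)| + |(z.2:ℝ)|) * Real.pi ^ 2) *
        ((Real.sqrt |θ.1|)⁻¹ * (Real.sqrt |θ.2|)⁻¹) := by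
  have hS : 0 < θ.1 ^ 2 + θ.2 ^ 2 := by positivity
  have hZ := Zsym_lower hθ
  have hZpos : 0 < Zsym θ := lt_of_lt_of_le (by positivity) hZ
  have hu : 0 < Real.sqrt (θ.1 ^ 2 + θ.2 ^ 2) := Real.sqrt_pos.2 hS
  have b1 : |θ.1| ≤ Real.sqrt (θ.1 ^ 2 + θ.2 ^ 2) := by
    rw [show |θ.1| = Real.sqrt (θ.1 ^ 2) by rw [Real.sqrt_sq_eq_abs]]
    exact Real.sqrt_le_sqrt (by nlinarith [sq_nonneg θ.2])
  have b2 : |θ.2| ≤ Real.sqrt (θ.1 ^ 2 + θ.2 ^ 2) := by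
    rw [show |θ.2| = Real.sqrt (θ.2 ^ 2) by rw [Real.sqrt_sq_eq_abs]]
    exact Real.sqrt_le_sqrt (by nlinarith [sq_nonneg θ.1])
  have hd : |Real.sin (latticeDot z θ)| ≤
      (|(z.1:ℝ)| + |(z.2:ℝ)|) * Real.sqrt (θ.1 ^ 2 + θ.2 ^ 2) := by
    refine Real.abs_sin_le_abs.trans ?_
    calc |latticeDot z θ| ≤ |(z.1:ℝ)| * |θ.1| + |(z.2:ℝ)| * |θ.2| := by
          unfold latticeDot
          exact (abs_add_le _ _).trans (by rw [abs_mul, abs_mul])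
      _ ≤ |(z.1:ℝ)| * Real.sqrt (θ.1 ^ 2 + θ.2 ^ 2)
            + |(z.2:ℝ)| * Real.sqrt (θ.1 ^ 2 + θ.2 ^ 2) :=
          add_le_add (mul_le_mul_of_nonneg_left b1 (abs_nonneg _))
            (mul_le_mul_of_nonneg_left b2 (abs_nonneg _))
      _ = (|(z.1:ℝ)| + |(z.2:ℝ)|) * Real.sqrt (θ.1 ^ 2 + θ.2 ^ 2) := by ring
  have hden : (0:ℝ) < (θ.1 ^ 2 + θ.2 ^ 2) / Real.pi ^ 2 := by positivity
  rw [Real.norm_eq_abs, abs_div, abs_of_pos hZpos]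
  calc |Real.sin (latticeDot z θ)| / Zsym θ
      ≤ ((|(z.1:ℝ)| + |(z.2:ℝ)|) * Real.sqrt (θ.1 ^ 2 + θ.2 ^ 2)) /
          ((θ.1 ^ 2 + θ.2 ^ 2) / Real.pi ^ 2) :=
        div_le_div₀ (by positivity) hd hden hZ
    _ = ((|(z.1:ℝ)| + |(z.2:ℝ)|) * Real.pi ^ 2) / Real.sqrt (θ.1 ^ 2 + θ.2 ^ 2) := by
        rw [show θ.1 ^ 2 + θ.2 ^ 2
            = Real.sqrt (θ.1 ^ 2 + θ.2 ^ 2) * Real.sqrt (θ.1 ^ 2 + θ.2 ^ 2) from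
          (Real.mul_self_sqrt hS.le).symm, Real.sqrt_mul_self hu.le]
        field_simp
    _ ≤ ((|(z.1:ℝ)| + |(z.2:ℝ)|) * Real.pi ^ 2) *
          ((Real.sqrt |θ.1|)⁻¹ * (Real.sqrt |θ.2|)⁻¹) := by
        have hprod : Real.sqrt |θ.1| * Real.sqrt |θ.2| ≤ Real.sqrt (θ.1 ^ 2 + θ.2 ^ 2) := by
          rw [← Real.sqrt_mul (abs_nonneg _)]
          refine Real.sqrt_le_sqrt ?_
          nlinarith [sq_nonneg (|θ.1| - |θ.2|), abs_nonneg θ.1, abs_nonneg θ.2,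
            sq_abs θ.1, sq_abs θ.2, mul_nonneg (abs_nonneg θ.1) (abs_nonneg θ.2)]
        have hp : 0 < Real.sqrt |θ.1| * Real.sqrt |θ.2| :=
          mul_pos (Real.sqrt_pos.2 (abs_pos.2 h1)) (Real.sqrt_pos.2 (abs_pos.2 h2))
        rw [div_eq_mul_inv, ← mul_inv]
        exact mul_le_mul_of_nonneg_left (inv_anti₀ hp hprod) (by positivity)

lemma integrableOn_cosdiv (z : ℤ × ℤ) :
    IntegrableOn (fun θ => (1 - Real.cos (latticeDot z θ)) / Zsym θ) box := by
  have hm : Measurable fun θ : ℝ × ℝ => (1 - Real.cos (latticeDot z θ)) / Zsym θ := by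
    unfold latticeDot Zsym; fun_prop
  refine Integrable.mono'
    (g := fun _ => ((z.1 : ℝ) ^ 2 + (z.2 : ℝ) ^ 2) * Real.pi ^ 2 / 2)
    (integrableOn_const volume_box_lt_top.ne) hm.aestronglyMeasurable ?_
  refine (ae_restrict_iff' measurableSet_box).2 (ae_of_all _ fun θ hθ => ?_)
  exact bound_cos z hθ

lemma intOn_inv_sqrt_abs :
    IntegrableOn (fun t : ℝ => (Real.sqrt |t|)⁻¹) (Set.Ioo (-Real.pi) Real.pi) := by
  have h0 : IntervalIntegrable (fun t : ℝ => (Real.sqrt |t|)⁻¹) volume 0 Real.pi := by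
    rw [intervalIntegrable_iff_integrableOn_Ioo_of_le Real.pi_pos.le]
    have h : IntegrableOn (fun t : ℝ => t ^ (-(1/2) : ℝ)) (Set.Ioo 0 Real.pi) :=
      (intervalIntegral.integrableOn_Ioo_rpow_iff Real.pi_pos).2 (by norm_num)
    refine h.congr_fun (fun t ht => ?_) measurableSet_Ioo
    rw [abs_of_pos ht.1]; beta_reduce; rw [Real.rpow_neg ht.1.le, ← Real.sqrt_eq_rpow]
  have hneg : IntervalIntegrable (fun t : ℝ => (Real.sqrt |t|)⁻¹) volume (-Real.pi) 0 := by
    have h := (IntervalIntegrable.iff_comp_neg).1 h0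
    simpa [abs_neg] using h.symm
  have h := hneg.trans h0
  rwa [intervalIntegrable_iff_integrableOn_Ioo_of_le (by linarith [Real.pi_pos])] at h

lemma intOn_prod_inv_sqrt :
    IntegrableOn (fun θ : ℝ × ℝ => (Real.sqrt |θ.1|)⁻¹ * (Real.sqrt |θ.2|)⁻¹) box := by
  have h := intOn_inv_sqrt_abs.mul_prod intOn_inv_sqrt_abs
  rwa [Measure.prod_restrict, ← Measure.volume_eq_prod] at h

lemma ae_fst_ne_zero : ∀ᵐ θ : ℝ × ℝ, θ.1 ≠ 0 := by
  have h : volume {θ : ℝ × ℝ | θ.1 = 0} = 0 := by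
    have he : {θ : ℝ × ℝ | θ.1 = 0} = ({0} : Set ℝ) ×ˢ (Set.univ : Set ℝ) := by
      ext ⟨a, b⟩; simp [Set.mem_prod, eq_comm]
    rw [he, Measure.volume_eq_prod, Measure.prod_prod]
    simp
  exact measure_eq_zero_iff_ae_notMem.1 h

lemma ae_snd_ne_zero : ∀ᵐ θ : ℝ × ℝ, θ.2 ≠ 0 := by
  have h : volume {θ : ℝ × ℝ | θ.2 = 0} = 0 := by
    have he : {θ : ℝ × ℝ | θ.2 = 0} = (Set.univ : Set ℝ) ×ˢ ({0} : Set ℝ) := by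
      ext ⟨a, b⟩; simp [Set.mem_prod, eq_comm]
    rw [he, Measure.volume_eq_prod, Measure.prod_prod]
    simp
  exact measure_eq_zero_iff_ae_notMem.1 h

lemma integrableOn_sindiv (z : ℤ × ℤ) :
    IntegrableOn (fun θ => Real.sin (latticeDot z θ) / Zsym θ) box := by
  have hm : Measurable fun θ : ℝ × ℝ => Real.sin (latticeDot z θ) / Zsym θ := by
    unfold latticeDot Zsym; fun_prop
  refine Integrable.mono'
    (g := fun θ : ℝ × ℝ => ((|(z.1:ℝ)| + |(z.2:ℝ)|) * Real.pi ^ 2) *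
      ((Real.sqrt |θ.1|)⁻¹ * (Real.sqrt |θ.2|)⁻¹))
    (intOn_prod_inv_sqrt.const_mul _) hm.aestronglyMeasurable ?_
  filter_upwards [ae_restrict_of_ae ae_fst_ne_zero, ae_restrict_of_ae ae_snd_ne_zero,
    ae_restrict_mem measurableSet_box] with θ h1 h2 hbox
  exact bound_sin z hbox h1 h2

/-- The complex density whose Fourier transform controls `a(y) − a(y−x)`. -/
noncomputable def Fc (x : ℤ × ℤ) : ℝ × ℝ → ℂ :=
  box.indicator fun θ =>
    (((Real.cos (latticeDot x θ) - 1) / Zsym θ : ℝ) : ℂ) -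
      Complex.I * ((Real.sin (latticeDot x θ) / Zsym θ : ℝ) : ℂ)

lemma integrableOn_cosdiv' (x : ℤ × ℤ) :
    IntegrableOn (fun θ => (Real.cos (latticeDot x θ) - 1) / Zsym θ) box := by
  have he : (fun θ : ℝ × ℝ => (Real.cos (latticeDot x θ) - 1) / Zsym θ)
      = fun θ => -((1 - Real.cos (latticeDot x θ)) / Zsym θ) := by
    funext θ; rw [← neg_div]; ring_nf
  rw [he]
  exact (integrableOn_cosdiv x).neg

lemma integrable_Fc (x : ℤ × ℤ) : Integrable (Fc x) := by
  rw [Fc, integrable_indicator_iff measurableSet_box]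
  exact (integrableOn_cosdiv' x).ofReal.sub
    (((integrableOn_sindiv x).ofReal (𝕜 := ℂ)).const_mul Complex.I)

/-- The dual functional associated with a lattice point. -/
noncomputable def W (y : ℤ × ℤ) : (ℝ × ℝ) →L[ℝ] ℝ :=
  (-(y.1 : ℝ) / (2 * Real.pi)) • ContinuousLinearMap.fst ℝ ℝ ℝ +
    (-(y.2 : ℝ) / (2 * Real.pi)) • ContinuousLinearMap.snd ℝ ℝ ℝ

lemma W_apply (y : ℤ × ℤ) (v : ℝ × ℝ) :
    W y v = -(y.1 : ℝ) / (2 * Real.pi) * v.1 + -(y.2 : ℝ) / (2 * Real.pi) * v.2 := by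
  simp [W, ContinuousLinearMap.add_apply, ContinuousLinearMap.smul_apply, smul_eq_mul]

lemma norm_W (y : ℤ × ℤ) : latticeNorm y ≤ 4 * Real.pi * ‖W y‖ := by
  have hπ : (0:ℝ) < Real.pi := Real.pi_pos
  have hn1 : ‖((1:ℝ), (0:ℝ))‖ = 1 := by simp [Prod.norm_def]
  have hn2 : ‖((0:ℝ), (1:ℝ))‖ = 1 := by simp [Prod.norm_def]
  have e1 : |(y.1 : ℝ)| / (2 * Real.pi) ≤ ‖W y‖ := by
    have h := (W y).le_opNorm ((1:ℝ), (0:ℝ))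
    have hval : W y ((1:ℝ), (0:ℝ)) = -(y.1:ℝ) / (2 * Real.pi) := by
      rw [W_apply]; norm_num
    rw [hval, hn1, mul_one, Real.norm_eq_abs, abs_div, abs_neg,
      abs_of_pos (by positivity : (0:ℝ) < 2 * Real.pi)] at h
    exact h
  have e2 : |(y.2 : ℝ)| / (2 * Real.pi) ≤ ‖W y‖ := by
    have h := (W y).le_opNorm ((0:ℝ), (1:ℝ))
    have hval : W y ((0:ℝ), (1:ℝ)) = -(y.2:ℝ) / (2 * Real.pi) := by
      rw [W_apply]; norm_num
    rw [hval, hn2, mul_one, Real.norm_eq_abs, abs_div, abs_neg,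
      abs_of_pos (by positivity : (0:ℝ) < 2 * Real.pi)] at h
    exact h
  have h3 : latticeNorm y ≤ |(y.1 : ℝ)| + |(y.2 : ℝ)| := by
    rw [latticeNorm]
    calc Real.sqrt ((y.1:ℝ)^2 + (y.2:ℝ)^2)
        ≤ Real.sqrt ((|(y.1:ℝ)| + |(y.2:ℝ)|)^2) := Real.sqrt_le_sqrt
          (by nlinarith [sq_abs (y.1:ℝ), sq_abs (y.2:ℝ),
            mul_nonneg (abs_nonneg (y.1:ℝ)) (abs_nonneg (y.2:ℝ))])
      _ = |(y.1:ℝ)| + |(y.2:ℝ)| := Real.sqrt_sq (by positivity)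
  have e1' : |(y.1 : ℝ)| ≤ 2 * Real.pi * ‖W y‖ := by
    rw [div_le_iff₀ (by positivity : (0:ℝ) < 2 * Real.pi)] at e1; linarith
  have e2' : |(y.2 : ℝ)| ≤ 2 * Real.pi * ‖W y‖ := by
    rw [div_le_iff₀ (by positivity : (0:ℝ) < 2 * Real.pi)] at e2; linarith
  linarith

lemma latticeDot_sub (y x : ℤ × ℤ) (θ : ℝ × ℝ) :
    latticeDot (y - x) θ = latticeDot y θ - latticeDot x θ := by
  unfold latticeDot
  rw [Prod.fst_sub, Prod.snd_sub]
  push_cast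
  ring

lemma diff_eq (x y : ℤ × ℤ) :
    potentialKernel y - potentialKernel (y - x) =
      ((2 * Real.pi) ^ 2)⁻¹ * (∫ v, 𝐞 (-(W y) v) • Fc x v).re := by
  have hInt : Integrable fun v => 𝐞 (-(W y) v) • Fc x v := by
    simp_rw [Circle.smul_def, smul_eq_mul]
    refine Integrable.bdd_mul (integrable_Fc x) ?_ (ae_of_all _ fun v => (by
      rw [Circle.norm_coe] : ‖((𝐞 (-(W y) v) : Circle) : ℂ)‖ ≤ 1))
    refine Continuous.aestronglyMeasurable ?_
    exact continuous_subtype_val.comp (Real.continuous_fourierChar.comp ((W y).continuous.neg))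
  have hre : (fun v => box.indicator (fun θ =>
        Real.cos (latticeDot y θ) * ((Real.cos (latticeDot x θ) - 1) / Zsym θ)
          + Real.sin (latticeDot y θ) * (Real.sin (latticeDot x θ) / Zsym θ)) v)
      = fun v => (𝐞 (-(W y) v) • Fc x v).re := by
    funext v
    by_cases hv : v ∈ box
    · rw [Set.indicator_of_mem hv, Fc, Set.indicator_of_mem hv, Circle.smul_def,
        Real.fourierChar_apply, smul_eq_mul]
      have harg : 2 * Real.pi * -(W y) v = latticeDot y v := by
        rw [W_apply]; unfold latticeDot
        field_simp
        ring
      rw [harg]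
      simp only [Complex.mul_re, Complex.exp_ofReal_mul_I_re, Complex.exp_ofReal_mul_I_im,
        Complex.sub_re, Complex.sub_im, Complex.ofReal_re, Complex.ofReal_im, Complex.mul_re,
        Complex.mul_im, Complex.I_re, Complex.I_im]
      ring
    · rw [Set.indicator_of_notMem hv, Fc, Set.indicator_of_notMem hv]
      simp
  have e0 : potentialKernel y - potentialKernel (y - x)
      = ((2 * Real.pi) ^ 2)⁻¹ *
        ((∫ θ in box, (1 - Real.cos (latticeDot y θ)) / Zsym θ) -
          (∫ θ in box, (1 - Real.cos (latticeDot (y - x) θ)) / Zsym θ)) := by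
    rw [potentialKernel, potentialKernel, ← mul_sub]
    rfl
  rw [e0, ← integral_sub (integrableOn_cosdiv y) (integrableOn_cosdiv (y - x))]
  congr 1
  have e1 : ∀ θ : ℝ × ℝ,
      (1 - Real.cos (latticeDot y θ)) / Zsym θ - (1 - Real.cos (latticeDot (y - x) θ)) / Zsym θ
      = Real.cos (latticeDot y θ) * ((Real.cos (latticeDot x θ) - 1) / Zsym θ)
        + Real.sin (latticeDot y θ) * (Real.sin (latticeDot x θ) / Zsym θ) := by
    intro θ
    rw [latticeDot_sub, Real.cos_sub, div_sub_div_same, ← mul_div_assoc, ← mul_div_assoc,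
      ← add_div]
    congr 1
    ring
  simp_rw [e1]
  rw [← integral_indicator measurableSet_box, hre]
  simp only [← RCLike.re_to_complex]
  exact integral_re hInt

lemma key (x : ℤ × ℤ) : ∀ ε : ℝ, 0 < ε → ∃ R : ℝ, ∀ y : ℤ × ℤ, R ≤ latticeNorm y →
    |potentialKernel y - potentialKernel (y - x)| < ε := by
  intro ε hε
  have hRL : Tendsto (fun w : (ℝ × ℝ) →L[ℝ] ℝ => ∫ v, 𝐞 (-w v) • Fc x v)
      (cocompact _) (𝓝 0) := tendsto_integral_exp_smul_cocompact (Fc x) volume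
  have hev : ∀ᶠ w in cocompact ((ℝ × ℝ) →L[ℝ] ℝ),
      (fun w : (ℝ × ℝ) →L[ℝ] ℝ => ∫ v, 𝐞 (-w v) • Fc x v) w ∈ Metric.ball (0:ℂ) ε :=
    hRL.eventually_mem (Metric.ball_mem_nhds 0 hε)
  rw [Filter.eventually_iff, mem_cocompact] at hev
  obtain ⟨K, hK, hKs⟩ := hev
  obtain ⟨M, hM⟩ := hK.isBounded.subset_closedBall 0
  refine ⟨4 * Real.pi * (M + 1), fun y hy => ?_⟩
  have hπ : (0:ℝ) < Real.pi := Real.pi_pos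
  have hWnorm : M + 1 ≤ ‖W y‖ := by
    have h2 : 4 * Real.pi * (M + 1) ≤ 4 * Real.pi * ‖W y‖ := le_trans hy (norm_W y)
    exact (mul_le_mul_iff_right₀ (by positivity : (0:ℝ) < 4 * Real.pi)).1 h2
  have hnotK : W y ∉ K := by
    intro hmem
    have h := hM hmem
    rw [Metric.mem_closedBall, dist_zero_right] at h
    linarith
  have hGsmall : ‖∫ v, 𝐞 (-(W y) v) • Fc x v‖ < ε := by
    have h := hKs hnotK
    rw [Set.mem_setOf_eq, mem_ball_zero_iff] at h
    exact h
  rw [diff_eq x y, abs_mul]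
  have hc : |((2 * Real.pi) ^ 2)⁻¹| ≤ 1 := by
    rw [abs_of_pos (by positivity)]
    rw [inv_le_one_iff₀]
    right
    nlinarith [Real.pi_gt_three]
  calc |((2 * Real.pi) ^ 2)⁻¹| * |(∫ v, 𝐞 (-(W y) v) • Fc x v).re|
      ≤ 1 * |(∫ v, 𝐞 (-(W y) v) • Fc x v).re| :=
        mul_le_mul_of_nonneg_right hc (abs_nonneg _)
    _ = |(∫ v, 𝐞 (-(W y) v) • Fc x v).re| := one_mul _
    _ ≤ ‖∫ v, 𝐞 (-(W y) v) • Fc x v‖ := Complex.abs_re_le_norm _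
    _ < ε := hGsmall

lemma potentialKernel_neg (z : ℤ × ℤ) : potentialKernel (-z) = potentialKernel z := by
  unfold potentialKernel
  congr 1
  apply integral_congr_ae
  refine ae_of_all _ fun θ => ?_
  have h : latticeDot (-z) θ = -latticeDot z θ := by
    unfold latticeDot
    rw [Prod.fst_neg, Prod.snd_neg]
    push_cast
    ring
  simp only [h, Real.cos_neg]

end Stmt16Aux

/-- Formula (2.Green.asymp): for fixed `x`, `a(y) − a(y−x) → 0` as
`‖y‖ → ∞`; consequently the Green-type function `H_x(y)` tends to the finite
limit `a(x)` at infinity. -/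
theorem stmt16 (x : ℤ × ℤ) :
    (∀ ε : ℝ, 0 < ε → ∃ R : ℝ,
      ∀ y : ℤ × ℤ, R ≤ latticeNorm y →
        |potentialKernel y - potentialKernel (y - x)| < ε) ∧
    (∀ ε : ℝ, 0 < ε → ∃ R : ℝ,
      ∀ y : ℤ × ℤ, R ≤ latticeNorm y →
        |greenFn x y - potentialKernel x| < ε) := by
  constructor
  · exact Stmt16Aux.key x
  · intro ε hε
    obtain ⟨R, hR⟩ := Stmt16Aux.key x ε hε
    refine ⟨R, fun y hy => ?_⟩
    have hx : potentialKernel (x - y) = potentialKernel (y - x) := by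
      rw [show x - y = -(y - x) from (neg_sub y x).symm, Stmt16Aux.potentialKernel_neg]
    have he : greenFn x y - potentialKernel x
        = potentialKernel y - potentialKernel (y - x) := by
      rw [greenFn, hx]; ring
    rw [he]
    exact hR y hy
end
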